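/- Let S ⊆ ℤ⁴ be the union over all positive integers m of the sets { (⌊(y − x : ℚ)/m⌋, ⌊(−x : ℚ)/m⌋, ⌊(−y : ℚ)/m⌋, ⌊(x − y : ℚ)/m⌋) : x, y ∈ ℤ, 0 ≤ x < m, 0 ≤ y < m }. Then S = { (0,0,0,0), (0,0,−1,−1), (−1,−1,0,0), (0,−1,−1,0), (−1,−1,−1,0), (0,−1,−1,−1) }; in particular S has exactly 6 elements. -/
import Mathlib

lemma flo (a m : ℤ) (hm : 0 < m) : ⌊(a : ℚ) / (m : ℚ)⌋ = a / m := by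
  have h : (m : ℚ) = ((m.toNat : ℕ) : ℚ) := by
    norm_cast; omega
  rw [h, Rat.floor_intCast_div_natCast]
  congr 1
  omega

lemma div0 (a m : ℤ) (h0 : 0 ≤ a) (h1 : a < m) : a / m = 0 :=
  Int.ediv_eq_zero_of_lt h0 h1

lemma divneg (a m : ℤ) (h0 : -m ≤ a) (h1 : a < 0) : a / m = -1 := by
  have hm : m ≠ 0 := by omega
  have := Int.add_mul_ediv_right a 1 hm
  rw [one_mul] at this
  have h2 : (a + m) / m = 0 := div0 _ _ (by omega) (by omega)
  omega

/-- §4.2: the set `𝔇` of Thomsen coefficient quadruples on the maximal toric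
del Pezzo surface `Y₃`. -/
theorem stmt_8 :
    {p : ℤ × ℤ × ℤ × ℤ | ∃ m : ℤ, 0 < m ∧ ∃ x y : ℤ,
        0 ≤ x ∧ x < m ∧ 0 ≤ y ∧ y < m ∧
        p = (⌊((y - x : ℤ) : ℚ) / (m : ℚ)⌋, ⌊((-x : ℤ) : ℚ) / (m : ℚ)⌋,
             ⌊((-y : ℤ) : ℚ) / (m : ℚ)⌋, ⌊((x - y : ℤ) : ℚ) / (m : ℚ)⌋)} =
      ({(0, 0, 0, 0), (0, 0, -1, -1), (-1, -1, 0, 0), (0, -1, -1, 0),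
        (-1, -1, -1, 0), (0, -1, -1, -1)} : Set (ℤ × ℤ × ℤ × ℤ)) ∧
    Set.ncard {p : ℤ × ℤ × ℤ × ℤ | ∃ m : ℤ, 0 < m ∧ ∃ x y : ℤ,
        0 ≤ x ∧ x < m ∧ 0 ≤ y ∧ y < m ∧
        p = (⌊((y - x : ℤ) : ℚ) / (m : ℚ)⌋, ⌊((-x : ℤ) : ℚ) / (m : ℚ)⌋,
             ⌊((-y : ℤ) : ℚ) / (m : ℚ)⌋, ⌊((x - y : ℤ) : ℚ) / (m : ℚ)⌋)} = 6 := by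
  have hset : {p : ℤ × ℤ × ℤ × ℤ | ∃ m : ℤ, 0 < m ∧ ∃ x y : ℤ,
        0 ≤ x ∧ x < m ∧ 0 ≤ y ∧ y < m ∧
        p = (⌊((y - x : ℤ) : ℚ) / (m : ℚ)⌋, ⌊((-x : ℤ) : ℚ) / (m : ℚ)⌋,
             ⌊((-y : ℤ) : ℚ) / (m : ℚ)⌋, ⌊((x - y : ℤ) : ℚ) / (m : ℚ)⌋)} =
      ({(0, 0, 0, 0), (0, 0, -1, -1), (-1, -1, 0, 0), (0, -1, -1, 0),
        (-1, -1, -1, 0), (0, -1, -1, -1)} : Set (ℤ × ℤ × ℤ × ℤ)) := by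
    ext p
    constructor
    · rintro ⟨m, hm, x, y, hx0, hxm, hy0, hym, rfl⟩
      rw [flo _ _ hm, flo _ _ hm, flo _ _ hm, flo _ _ hm]
      simp only [Set.mem_insert_iff, Set.mem_singleton_iff, Prod.mk.injEq]
      rcases eq_or_lt_of_le hx0 with hx | hx
      · rcases eq_or_lt_of_le hy0 with hy | hy
        · left
          rw [div0 _ _ (by omega) (by omega), div0 _ _ (by omega) (by omega),
            div0 _ _ (by omega) (by omega), div0 _ _ (by omega) (by omega)]
          tauto
        · right; left
          rw [div0 _ _ (by omega) (by omega), div0 _ _ (by omega) (by omega),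
            divneg _ _ (by omega) (by omega), divneg _ _ (by omega) (by omega)]
          tauto
      · rcases eq_or_lt_of_le hy0 with hy | hy
        · right; right; left
          rw [divneg _ _ (by omega) (by omega), divneg _ _ (by omega) (by omega),
            div0 _ _ (by omega) (by omega), div0 _ _ (by omega) (by omega)]
          tauto
        · rcases lt_trichotomy x y with h | h | h
          · right; right; right; right; right
            rw [div0 _ _ (by omega) (by omega), divneg _ _ (by omega) (by omega),
              divneg _ _ (by omega) (by omega), divneg _ _ (by omega) (by omega)]
            tauto
          · right; right; right; left
            rw [div0 _ _ (by omega) (by omega), divneg _ _ (by omega) (by omega),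
              divneg _ _ (by omega) (by omega), div0 _ _ (by omega) (by omega)]
            tauto
          · right; right; right; right; left
            rw [divneg _ _ (by omega) (by omega), divneg _ _ (by omega) (by omega),
              divneg _ _ (by omega) (by omega), div0 _ _ (by omega) (by omega)]
            tauto
    · intro hp
      simp only [Set.mem_insert_iff, Set.mem_singleton_iff] at hp
      have key : ∀ x y : ℤ, 0 ≤ x → x < 3 → 0 ≤ y → y < 3 →
          (∃ m : ℤ, 0 < m ∧ ∃ x' y' : ℤ, 0 ≤ x' ∧ x' < m ∧ 0 ≤ y' ∧ y' < m ∧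
            ((⌊((y - x : ℤ) : ℚ) / ((3:ℤ) : ℚ)⌋, ⌊((-x : ℤ) : ℚ) / ((3:ℤ) : ℚ)⌋,
             ⌊((-y : ℤ) : ℚ) / ((3:ℤ) : ℚ)⌋, ⌊((x - y : ℤ) : ℚ) / ((3:ℤ) : ℚ)⌋) : ℤ×ℤ×ℤ×ℤ)
            = (⌊((y' - x' : ℤ) : ℚ) / (m : ℚ)⌋, ⌊((-x' : ℤ) : ℚ) / (m : ℚ)⌋,
             ⌊((-y' : ℤ) : ℚ) / (m : ℚ)⌋, ⌊((x' - y' : ℤ) : ℚ) / (m : ℚ)⌋)) :=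
        fun x y h1 h2 h3 h4 => ⟨3, by norm_num, x, y, h1, h2, h3, h4, rfl⟩
      have h3 : (0:ℤ) < 3 := by norm_num
      rcases hp with h | h | h | h | h | h <;> subst h
      · refine ⟨3, h3, 0, 0, by norm_num, by norm_num, by norm_num, by norm_num, ?_⟩
        simp only [flo _ _ h3]; decide
      · refine ⟨3, h3, 0, 1, by norm_num, by norm_num, by norm_num, by norm_num, ?_⟩
        simp only [flo _ _ h3]; decide
      · refine ⟨3, h3, 1, 0, by norm_num, by norm_num, by norm_num, by norm_num, ?_⟩
        simp only [flo _ _ h3]; decide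
      · refine ⟨3, h3, 1, 1, by norm_num, by norm_num, by norm_num, by norm_num, ?_⟩
        simp only [flo _ _ h3]; decide
      · refine ⟨3, h3, 2, 1, by norm_num, by norm_num, by norm_num, by norm_num, ?_⟩
        simp only [flo _ _ h3]; decide
      · refine ⟨3, h3, 1, 2, by norm_num, by norm_num, by norm_num, by norm_num, ?_⟩
        simp only [flo _ _ h3]; decide
  refine ⟨hset, ?_⟩
  rw [hset]
  rw [show ({(0, 0, 0, 0), (0, 0, -1, -1), (-1, -1, 0, 0), (0, -1, -1, 0),
        (-1, -1, -1, 0), (0, -1, -1, -1)} : Set (ℤ × ℤ × ℤ × ℤ)) =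
      (({(0, 0, 0, 0), (0, 0, -1, -1), (-1, -1, 0, 0), (0, -1, -1, 0),
        (-1, -1, -1, 0), (0, -1, -1, -1)} : Finset (ℤ × ℤ × ℤ × ℤ)) : Set (ℤ×ℤ×ℤ×ℤ)) by simp]
  rw [Set.ncard_coe_finset]
  decide
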